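/- Let k be a perfect field of characteristic p > 0, V a finite-dimensional k-vector space, φ a σ-semilinear endomorphism of V (σ the Frobenius of k), and let k̄ be an algebraic closure of k. Then the stable rank of φ on V equals the stable rank of φ ⊗ σ̄ on V ⊗_k k̄. -/

import Mathlib

open TensorProduct

section Aux

variable {K M : Type*} [Field K] (p : ℕ) [Fact p.Prime] [CharP K p] [PerfectRing K p]
  [AddCommGroup M] [Module K M]

/-- pushforward of a submodule under a Frobenius-semilinear map -/
def pushSub (f : M → M) (hadd : ∀ x y, f (x + y) = f x + f y)
    (hsmul : ∀ (c : K) x, f (c • x) = c ^ p • f x) (W : Submodule K M) : Submodule K M where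
  carrier := f '' W
  add_mem' := by
    rintro _ _ ⟨x, hx, rfl⟩ ⟨y, hy, rfl⟩
    exact ⟨x + y, W.add_mem hx hy, (hadd x y)⟩
  zero_mem' := by
    refine ⟨0, W.zero_mem, ?_⟩
    have := hsmul 0 0
    simpa [zero_pow (Nat.Prime.ne_zero Fact.out)] using this
  smul_mem' := by
    rintro c _ ⟨x, hx, rfl⟩
    refine ⟨(frobeniusEquiv K p).symm c • x, W.smul_mem _ hx, ?_⟩
    rw [hsmul, frobeniusEquiv_symm_pow_p]

lemma pushSub_coe (f : M → M) (hadd : ∀ x y, f (x + y) = f x + f y)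
    (hsmul : ∀ (c : K) x, f (c • x) = c ^ p • f x) (W : Submodule K M) :
    (pushSub p f hadd hsmul W : Set M) = f '' W := rfl

lemma pushSub_mono (f : M → M) (hadd : ∀ x y, f (x + y) = f x + f y)
    (hsmul : ∀ (c : K) x, f (c • x) = c ^ p • f x) {W W' : Submodule K M} (h : W ≤ W') :
    pushSub p f hadd hsmul W ≤ pushSub p f hadd hsmul W' := by
  rintro _ ⟨x, hx, rfl⟩
  exact ⟨x, h hx, rfl⟩

lemma range_iter_eq (f : M → M) (hadd : ∀ x y, f (x + y) = f x + f y)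
    (hsmul : ∀ (c : K) x, f (c • x) = c ^ p • f x) (i : ℕ) :
    Set.range (f^[i]) = ((pushSub p f hadd hsmul)^[i] ⊤ : Submodule K M) := by
  induction i with
  | zero => simp
  | succ n ih =>
      rw [Function.iterate_succ', Set.range_comp, ih, Function.iterate_succ_apply',
        pushSub_coe]

lemma chain_anti (f : M → M) (hadd : ∀ x y, f (x + y) = f x + f y)
    (hsmul : ∀ (c : K) x, f (c • x) = c ^ p • f x) :
    Antitone (fun i => (pushSub p f hadd hsmul)^[i] ⊤) := by
  apply antitone_nat_of_succ_le
  intro n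
  induction n with
  | zero => exact le_top
  | succ m ih =>
      calc (pushSub p f hadd hsmul)^[m + 1 + 1] ⊤
          = pushSub p f hadd hsmul ((pushSub p f hadd hsmul)^[m + 1] ⊤) :=
            Function.iterate_succ_apply' _ _ _
        _ ≤ pushSub p f hadd hsmul ((pushSub p f hadd hsmul)^[m] ⊤) :=
            pushSub_mono p f hadd hsmul ih
        _ = (pushSub p f hadd hsmul)^[m + 1] ⊤ := (Function.iterate_succ_apply' _ _ _).symm

end Aux

section BC

variable {k V : Type*} [Field k] [AddCommGroup V] [Module k V] [FiniteDimensional k V]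

omit [FiniteDimensional k V] in
lemma baseChange_mono' (K : Type*) [Field K] [Algebra k K] {W W' : Submodule k V}
    (h : W ≤ W') : W.baseChange K ≤ W'.baseChange K := by
  rw [Submodule.baseChange_eq_span, Submodule.baseChange_eq_span]
  exact Submodule.span_mono (Submodule.map_mono h)

lemma finrank_baseChange_eq (K : Type*) [Field K] [Algebra k K] (W : Submodule k V) :
    Module.finrank K (W.baseChange K) = Module.finrank k W := by
  have hinj : Function.Injective (W.subtype.baseChange K) := by
    rw [LinearMap.baseChange_eq_ltensor]
    exact Module.Flat.lTensor_preserves_injective_linearMap _ W.injective_subtype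
  have hrange : LinearMap.range (W.subtype.baseChange K) = W.baseChange K := by
    apply le_antisymm
    · rintro _ ⟨y, rfl⟩
      induction y with
      | zero => simp
      | tmul a w =>
          simpa using Submodule.tmul_mem_baseChange_of_mem a w.2
      | add x y hx hy => rw [map_add]; exact Submodule.add_mem _ hx hy
    · rw [Submodule.baseChange_eq_span, Submodule.span_le, Submodule.map_coe]
      rintro _ ⟨w, hw, rfl⟩
      exact ⟨1 ⊗ₜ ⟨w, hw⟩, rfl⟩
  rw [← hrange, LinearMap.finrank_range_of_inj hinj, Module.finrank_baseChange]

end BC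

theorem stmt_2 {k V : Type*} [Field k] (p : ℕ) [Fact p.Prime] [CharP k p] [PerfectRing k p]
    [AddCommGroup V] [Module k V] [FiniteDimensional k V]
    (φ : V → V) (hadd : ∀ x y : V, φ (x + y) = φ x + φ y)
    (hsmul : ∀ (c : k) (x : V), φ (c • x) = c ^ p • φ x)
    (ψ : AlgebraicClosure k ⊗[k] V → AlgebraicClosure k ⊗[k] V)
    (hψadd : ∀ x y, ψ (x + y) = ψ x + ψ y)
    (hψsmul : ∀ (c : AlgebraicClosure k) x, ψ (c • x) = c ^ p • ψ x)
    (hcompat : ∀ (a : AlgebraicClosure k) (v : V), ψ (a ⊗ₜ[k] v) = (a ^ p) ⊗ₜ[k] φ v)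
    (S : Submodule k V) (T : Submodule (AlgebraicClosure k) (AlgebraicClosure k ⊗[k] V))
    (hS : (S : Set V) = ⋂ i : ℕ, Set.range (φ^[i]))
    (hT : (T : Set (AlgebraicClosure k ⊗[k] V)) = ⋂ i : ℕ, Set.range (ψ^[i])) :
    Module.finrank k S = Module.finrank (AlgebraicClosure k) T := by
  set K := AlgebraicClosure k
  set F := pushSub p φ hadd hsmul with hF
  set G := pushSub (K := K) p ψ hψadd hψsmul with hG
  -- base change compatibility
  have key : ∀ W : Submodule k V, G (W.baseChange K) = (F W).baseChange K := by
    intro W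
    apply le_antisymm
    · rintro _ ⟨x, hx, rfl⟩
      rw [SetLike.mem_coe, Submodule.baseChange_eq_span] at hx
      induction hx using Submodule.span_induction with
      | mem y hy =>
          obtain ⟨w, hw, rfl⟩ := hy
          have h1 : φ w ∈ F W := ⟨w, hw, rfl⟩
          have h2 := Submodule.tmul_mem_baseChange_of_mem (p := F W) (1 : K) h1
          show ψ ((1 : K) ⊗ₜ[k] w) ∈ _
          rw [hcompat, one_pow]
          exact h2
      | zero =>
          have : ψ 0 = 0 := by
            have := hψsmul 0 0
            simpa [zero_pow (Nat.Prime.ne_zero (Fact.out : p.Prime))] using this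
          rw [this]; exact Submodule.zero_mem _
      | add x y _ _ hx hy => rw [hψadd]; exact Submodule.add_mem _ hx hy
      | smul c x _ hx => rw [hψsmul]; exact Submodule.smul_mem _ _ hx
    · rw [Submodule.baseChange_eq_span, Submodule.span_le, Submodule.map_coe]
      rintro _ ⟨u, hu, rfl⟩
      obtain ⟨w, hw, rfl⟩ := hu
      show (TensorProduct.mk k K V 1) (φ w) ∈ G (Submodule.baseChange K W)
      refine ⟨(1 : K) ⊗ₜ[k] w, Submodule.tmul_mem_baseChange_of_mem 1 hw, ?_⟩
      rw [hcompat, one_pow]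
      rfl
  -- iterated version
  have keyiter : ∀ i : ℕ, G^[i] ⊤ = ((F^[i] ⊤ : Submodule k V)).baseChange K := by
    intro i
    induction i with
    | zero => simp
    | succ n ih =>
        rw [Function.iterate_succ_apply' G n, ih, key, Function.iterate_succ_apply' F n]
  -- stabilization
  set d : ℕ → ℕ := fun i => Module.finrank k (F^[i] ⊤ : Submodule k V) with hd
  have hWanti : Antitone (fun i => F^[i] ⊤) := chain_anti p φ hadd hsmul
  obtain ⟨N, hN⟩ : ∃ N, d N = sInf (Set.range d) :=
    Nat.sInf_mem (Set.range_nonempty d)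
  have hstab : ∀ i, N ≤ i → F^[i] ⊤ = F^[N] ⊤ := by
    intro i hi
    refine Submodule.eq_of_le_of_finrank_le (hWanti hi) ?_
    show d N ≤ d i
    rw [hN]
    exact Nat.sInf_le ⟨i, rfl⟩
  have hSinter : (⋂ i : ℕ, Set.range (φ^[i])) = ((F^[N] ⊤ : Submodule k V) : Set V) := by
    apply le_antisymm
    · exact Set.iInter_subset_of_subset N (by rw [range_iter_eq p φ hadd hsmul])
    · refine Set.subset_iInter fun i => ?_
      rw [range_iter_eq p φ hadd hsmul]
      intro x hx
      rcases le_total i N with h | h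
      · exact hWanti h hx
      · rw [hstab i h]; exact hx
  have hTinter : (⋂ i : ℕ, Set.range (ψ^[i]))
      = (((F^[N] ⊤ : Submodule k V).baseChange K : Set (K ⊗[k] V))) := by
    apply le_antisymm
    · refine Set.iInter_subset_of_subset N ?_
      rw [range_iter_eq (K := K) p ψ hψadd hψsmul, keyiter]
    · refine Set.subset_iInter fun i => ?_
      rw [range_iter_eq (K := K) p ψ hψadd hψsmul, keyiter]
      intro x hx
      rcases le_total i N with h | h
      · exact baseChange_mono' K (hWanti h) hx
      · rw [hstab i h]; exact hx
  have hSeq : S = F^[N] ⊤ := SetLike.coe_injective (by rw [hS, hSinter])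
  have hTeq : T = (F^[N] ⊤ : Submodule k V).baseChange K :=
    SetLike.coe_injective (by rw [hT, hTinter])
  rw [hSeq, hTeq, finrank_baseChange_eq]
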